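/- Every hypergraph that admits a disjoint branches decomposition is β-acyclic, i.e., every subhypergraph of it is α-acyclic. -/

import Mathlib

open SimpleGraph

set_option linter.unusedSectionVars false

namespace Stmt12Aux

variable {α : Type} [DecidableEq α] {G : SimpleGraph α}

noncomputable def upath (hT : G.IsTree) (a b : α) : G.Walk a b :=
  (hT.existsUnique_path a b).choose

lemma upath_isPath (hT : G.IsTree) (a b : α) : (upath hT a b).IsPath :=
  (hT.existsUnique_path a b).choose_spec.1

lemma upath_eq (hT : G.IsTree) {a b : α} (p : G.Walk a b) (hp : p.IsPath) :
    p = upath hT a b :=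
  (hT.existsUnique_path a b).choose_spec.2 p hp

/-- `a` is an ancestor of `b` with respect to root `r`. -/
def anc (hT : G.IsTree) (r a b : α) : Prop := a ∈ (upath hT r b).support

lemma anc_refl (hT : G.IsTree) (r b : α) : anc hT r b b :=
  SimpleGraph.Walk.end_mem_support _

lemma upath_takeUntil (hT : G.IsTree) {r a b : α} (h : anc hT r a b) :
    upath hT r a = (upath hT r b).takeUntil a h :=
  (upath_eq hT _ ((upath_isPath hT r b).takeUntil h)).symm

lemma anc_trans (hT : G.IsTree) {r a b c : α} (h1 : anc hT r a b) (h2 : anc hT r b c) :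
    anc hT r a c := by
  have := upath_takeUntil hT h2
  unfold anc at h1 ⊢
  rw [this] at h1
  exact SimpleGraph.Walk.support_takeUntil_subset _ _ h1

lemma length_lt_of_anc (hT : G.IsTree) {r a b : α} (h : anc hT r a b) (hne : a ≠ b) :
    (upath hT r a).length < (upath hT r b).length := by
  have hsplit := SimpleGraph.Walk.take_spec (upath hT r b) h
  have hlen : ((upath hT r b).takeUntil a h).length + ((upath hT r b).dropUntil a h).length
      = (upath hT r b).length := by
    rw [← SimpleGraph.Walk.length_append, hsplit]
  rw [upath_takeUntil hT h]
  have : ((upath hT r b).dropUntil a h).length ≠ 0 := by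
    intro h0
    exact hne (SimpleGraph.Walk.eq_of_length_eq_zero h0)
  omega

lemma anc_antisymm (hT : G.IsTree) {r a b : α} (h1 : anc hT r a b) (h2 : anc hT r b a) :
    a = b := by
  by_contra hne
  have := length_lt_of_anc hT h1 hne
  have := length_lt_of_anc hT h2 (Ne.symm hne)
  omega

end Stmt12Aux

namespace Stmt12Aux

variable {α : Type} [DecidableEq α] {G : SimpleGraph α}

lemma prefix_tail {l₁ l₂ : List α} (h : l₁ <+: l₂) : l₁.tail <+: l₂.tail := by
  obtain ⟨t, rfl⟩ := h
  cases l₁ with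
  | nil => simp
  | cons a as => exact ⟨t, rfl⟩

lemma support_takeUntil_prefix {u v w : α} (p : G.Walk u v) (h : w ∈ p.support) :
    (p.takeUntil w h).support <+: p.support := by
  conv_rhs => rw [← SimpleGraph.Walk.take_spec p h]
  rw [SimpleGraph.Walk.support_append]
  exact ⟨_, rfl⟩

lemma anc_total (hT : G.IsTree) {r a b c : α} (h1 : anc hT r a c) (h2 : anc hT r b c) :
    anc hT r a b ∨ anc hT r b a := by
  unfold anc at *
  set p := upath hT r c with hp
  by_cases hb : b ∈ (p.takeUntil a h1).support
  · right
    rwa [upath_takeUntil hT h1]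
  · left
    -- b is in the dropUntil part
    have hbd : b ∈ (p.dropUntil a h1).support := by
      have := SimpleGraph.Walk.take_spec p h1
      rw [← this, SimpleGraph.Walk.mem_support_append_iff] at h2
      tauto
    set t := p.takeUntil a h1 with ht
    set d := p.dropUntil a h1 with hd
    set q : G.Walk r b := t.append (d.takeUntil b hbd) with hq
    have hqpath : q.IsPath := by
      rw [SimpleGraph.Walk.isPath_def, hq, SimpleGraph.Walk.support_append]
      have hpre : ((d.takeUntil b hbd).support).tail <+: d.support.tail :=
        prefix_tail (support_takeUntil_prefix d hbd)
      have hnodup : (t.support ++ d.support.tail).Nodup := by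
        rw [← SimpleGraph.Walk.support_append, SimpleGraph.Walk.take_spec p h1]
        exact (upath_isPath hT r c).support_nodup
      exact List.Nodup.sublist (hpre.sublist.append_left t.support) hnodup
    have : q = upath hT r b := upath_eq hT q hqpath
    rw [← this, hq, SimpleGraph.Walk.mem_support_append_iff]
    left
    exact SimpleGraph.Walk.end_mem_support t

end Stmt12Aux

namespace Stmt12Aux

variable {α : Type} [DecidableEq α] {G : SimpleGraph α}

lemma anc_of_le (hT : G.IsTree) {r a b c : α} (h1 : anc hT r a c) (h2 : anc hT r b c)
    (hlen : (upath hT r a).length ≤ (upath hT r b).length) : anc hT r a b := by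
  rcases anc_total hT h1 h2 with h | h
  · exact h
  · rcases eq_or_ne b a with rfl | hne
    · exact anc_refl hT r _
    · exact absurd (length_lt_of_anc hT h hne) (by omega)

lemma mem_upath_between (hT : G.IsTree) {r a b c : α} (h1 : anc hT r a c) (h2 : anc hT r c b) :
    c ∈ (upath hT a b).support := by
  have hab : anc hT r a b := anc_trans hT h1 h2
  set p := upath hT r b with hp
  have hD : (p.dropUntil a hab) = upath hT a b :=
    upath_eq hT _ ((upath_isPath hT r b).dropUntil hab)
  rw [← hD]
  have h2' : c ∈ p.support := h2
  rw [← SimpleGraph.Walk.take_spec p hab, SimpleGraph.Walk.mem_support_append_iff] at h2'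
  rcases h2' with h2' | h2'
  · have : anc hT r c a := by rw [anc, upath_takeUntil hT hab]; exact h2'
    have : c = a := anc_antisymm hT this h1
    subst this
    exact SimpleGraph.Walk.start_mem_support _
  · exact h2'

lemma walk_through (hT : G.IsTree) (S : Set α) (hconn : (G.induce S).Preconnected)
    {a b : α} (ha : a ∈ S) (hb : b ∈ S) {c : α} (hc : c ∈ (upath hT a b).support) : c ∈ S := by
  obtain ⟨w⟩ := hconn ⟨a, ha⟩ ⟨b, hb⟩
  let hom : (G.induce S) →g G := ⟨Subtype.val, fun {x y} h => h⟩
  let w' : G.Walk a b := w.map hom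
  have hup : w'.bypass = upath hT a b := upath_eq hT _ w'.bypass_isPath
  rw [← hup] at hc
  have hc' : c ∈ w'.support := SimpleGraph.Walk.support_bypass_subset _ hc
  rw [SimpleGraph.Walk.support_map] at hc'
  obtain ⟨x, _, rfl⟩ := List.mem_map.mp hc'
  exact x.2

end Stmt12Aux

namespace Stmt12Aux

lemma isTree_fromRel {M : Type} [Nonempty M] (parent : M → M) (rank : M → ℕ) (r0 : M)
    (hr : parent r0 = r0) (hdec : ∀ x, x ≠ r0 → rank (parent x) < rank x) :
    (SimpleGraph.fromRel (fun x y => parent x = y)).IsTree := by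
  classical
  set G' := SimpleGraph.fromRel (fun x y => parent x = y) with hG'
  have hadj : ∀ x, x ≠ r0 → G'.Adj x (parent x) := by
    intro x hx
    rw [hG', SimpleGraph.fromRel_adj]
    have := hdec x hx
    exact ⟨fun h => by rw [← h] at this; omega, Or.inl rfl⟩
  have hnbr : ∀ m y, G'.Adj m y → rank y ≤ rank m → y = parent m := by
    intro m y hmy hle
    rw [hG', SimpleGraph.fromRel_adj] at hmy
    rcases hmy.2 with h | h
    · exact h.symm
    · exfalso
      rcases eq_or_ne y r0 with rfl | hy0
      · rw [hr] at h; exact hmy.1 h.symm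
      · have := hdec y hy0; rw [h] at this; omega
  constructor
  · refine ⟨fun x y => ?_⟩
    have key : ∀ n x, rank x ≤ n → G'.Reachable x r0 := by
      intro n
      induction n with
      | zero =>
        intro x hx
        rcases eq_or_ne x r0 with rfl | hx0
        · rfl
        · exact absurd (hdec x hx0) (by omega)
      | succ n ih =>
        intro x hx
        rcases eq_or_ne x r0 with rfl | hx0
        · rfl
        · exact (hadj x hx0).reachable.trans (ih _ (by have := hdec x hx0; omega))
    exact (key _ x le_rfl).trans (key _ y le_rfl).symm
  · intro u c hc
    obtain ⟨m, hmmem, hmmax⟩ : ∃ m ∈ c.support, ∀ y ∈ c.support, rank y ≤ rank m := by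
      cases hargmax : List.argmax rank c.support with
      | none =>
        exact absurd (List.argmax_eq_none.mp hargmax) (SimpleGraph.Walk.support_ne_nil c)
      | some m =>
        exact ⟨m, List.argmax_mem hargmax, fun y hy => List.le_of_mem_argmax hy hargmax⟩
    set c' := c.rotate m hmmem with hc'def
    have hc' : c'.IsCycle := hc.rotate hmmem
    have hsup : ∀ y ∈ c'.support, rank y ≤ rank m := by
      intro y hy
      rw [SimpleGraph.Walk.support_eq_cons c'] at hy
      rcases List.mem_cons.mp hy with rfl | hy'
      · exact le_rfl
      · have := (SimpleGraph.Walk.support_rotate c m hmmem).mem_iff.mp hy'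
        apply hmmax y
        rw [SimpleGraph.Walk.support_eq_cons c]
        exact List.mem_cons_of_mem _ this
    have hlen3 : 3 ≤ c'.length := hc'.three_le_length
    have hnn : ¬ c'.Nil := by rw [SimpleGraph.Walk.nil_iff_length_eq]; omega
    obtain ⟨w, hmw, q, hq⟩ := SimpleGraph.Walk.not_nil_iff.mp hnn
    have hnn2 : ¬ c'.reverse.Nil := by
      rw [SimpleGraph.Walk.nil_iff_length_eq, SimpleGraph.Walk.length_reverse]; omega
    obtain ⟨w2, hmw2, q2, hq2⟩ := SimpleGraph.Walk.not_nil_iff.mp hnn2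
    have hwsup : w ∈ c'.support := by
      rw [hq, SimpleGraph.Walk.support_cons]
      exact List.mem_cons_of_mem _ (SimpleGraph.Walk.start_mem_support q)
    have hw : w = parent m := hnbr m w hmw (hsup w hwsup)
    have hw2sup : w2 ∈ c'.support := by
      have h2 : w2 ∈ c'.reverse.support := by
        rw [hq2, SimpleGraph.Walk.support_cons]
        exact List.mem_cons_of_mem _ (SimpleGraph.Walk.start_mem_support q2)
      rwa [SimpleGraph.Walk.support_reverse, List.mem_reverse] at h2
    have hw2 : w2 = parent m := hnbr m w2 hmw2 (hsup w2 hw2sup)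
    have he1 : c'.edges = s(m, w) :: q.edges := by rw [hq, SimpleGraph.Walk.edges_cons]
    have he2 : c'.edges.reverse = s(m, w2) :: q2.edges := by
      rw [← SimpleGraph.Walk.edges_reverse, hq2, SimpleGraph.Walk.edges_cons]
    have hnodup : c'.edges.Nodup := hc'.isCircuit.isTrail.edges_nodup
    have hee : s(m, w2) = s(m, w) := by rw [hw, hw2]
    have heq : c'.edges = q2.edges.reverse ++ [s(m, w)] := by
      rw [← List.reverse_reverse c'.edges, he2, hee]; simp
    rw [he1] at heq hnodup
    have hlenq : q.edges.length + 1 = c'.length := by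
      rw [hq, SimpleGraph.Walk.length_cons, SimpleGraph.Walk.length_edges]
    cases hr2 : q2.edges.reverse with
    | nil =>
      rw [hr2] at heq
      simp at heq
      rw [SimpleGraph.Walk.length_edges, SimpleGraph.Walk.nil_iff_length_eq.mp heq] at hlenq
      simp at hlenq
      omega
    | cons f t =>
      rw [hr2] at heq
      simp only [List.cons_append, List.cons.injEq] at heq
      have : s(m, w) ∈ q.edges := by rw [heq.2]; simp
      simp at hnodup
      exact hnodup.1 this

end Stmt12Aux



variable {V : Type} [DecidableEq V]

/-- A join tree of a hypergraph with edge set `E`: a tree on node set `E` such that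
for every vertex `v`, the edges containing `v` induce a connected subtree. -/
structure JoinTreeOf (E : Finset (Finset V)) where
  T : SimpleGraph {f // f ∈ E}
  isTree : T.IsTree
  conn : ∀ v : V, (T.induce {f : {f // f ∈ E} | v ∈ f.1}).Preconnected

/-- `x` lies on the (unique) path from `r` to `y` in `G`. -/
def onTreePath {α : Type} (G : SimpleGraph α) (r y x : α) : Prop :=
  ∀ p : G.Walk r y, p.IsPath → x ∈ p.support

/-- A disjoint branches decomposition of the hypergraph with edge set `E`, rooted at `root`:
a join tree rooted at `root` in which any two edges on different branches
(neither an ancestor of the other) are disjoint. -/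
structure DBD (E : Finset (Finset V)) (root : Finset V) where
  J : JoinTreeOf E
  rootMem : root ∈ E
  disj : ∀ a b : {f // f ∈ E}, a ≠ b →
    ¬ onTreePath J.T ⟨root, rootMem⟩ b a →
    ¬ onTreePath J.T ⟨root, rootMem⟩ a b →
    a.1 ∩ b.1 = ∅

/-- `H` is db-rootable in `e`. -/
def DbRootable (E : Finset (Finset V)) (e : Finset V) : Prop := Nonempty (DBD E e)

/-- Two hyperedges are linked by a path of pairwise-intersecting edges of `E`. -/
def edgeLinked (E : Finset (Finset V)) (a b : Finset V) : Prop :=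
  Relation.ReflTransGen (fun x y => x ∈ E ∧ y ∈ E ∧ (x ∩ y).Nonempty) a b

open Classical in
/-- The connected component (as a set of edges) of the edge `e` in the hypergraph `E`. -/
noncomputable def component (E : Finset (Finset V)) (e : Finset V) : Finset (Finset V) :=
  E.filter (edgeLinked E e)

/-- `C` is (the edge set of) a connected component of the hypergraph with edge set `E`. -/
def IsComponent (E C : Finset (Finset V)) : Prop := ∃ e ∈ E, C = component E e

/-- The hypergraph with edge set `E` is connected. -/
def HGConnected (E : Finset (Finset V)) : Prop := ∀ a ∈ E, ∀ b ∈ E, edgeLinked E a b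

/-- Vertices `u` and `w` are connected by a path of edges in `E`. -/
def vtxLinked (E : Finset (Finset V)) (u w : V) : Prop :=
  Relation.ReflTransGen (fun x y => ∃ f ∈ E, x ∈ f ∧ y ∈ f) u w

/-- The hypergraph has a join path: a join tree whose underlying tree is a path
(every node has at most two neighbours). -/
def HasJoinPath (E : Finset (Finset V)) : Prop :=
  ∃ J : JoinTreeOf E, ∀ f : {f // f ∈ E}, (J.T.neighborSet f).ncard ≤ 2

/-- A hypergraph is α-acyclic if it has a join tree. -/
def AlphaAcyclic (E : Finset (Finset V)) : Prop := E = ∅ ∨ Nonempty (JoinTreeOf E)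


section Main

open Stmt12Aux

/-- every hypergraph admitting a disjoint branches decomposition is
β-acyclic: every subhypergraph of it is α-acyclic. -/
theorem stmt12 (E : Finset (Finset V)) (e : Finset V) (h : DbRootable E e)
    (E' : Finset (Finset V)) (V' : Finset V)
    (hsub : ∀ f ∈ E', f ≠ ∅ ∧ ∃ g ∈ E, f = g ∩ V') :
    AlphaAcyclic E' := by
  classical
  rcases h with ⟨D⟩
  rcases eq_or_ne E' ∅ with rfl | hE'
  · exact Or.inl rfl
  right
  obtain ⟨f0, hf0⟩ := Finset.nonempty_iff_ne_empty.mpr hE'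
  have hT : D.J.T.IsTree := D.J.isTree
  set T := D.J.T with hTdef
  set r : {f // f ∈ E} := ⟨e, D.rootMem⟩ with hrdef
  have hex : ∀ x : {f // f ∈ E'}, ∃ gx : {f // f ∈ E}, x.1 = gx.1 ∩ V' := by
    intro x
    obtain ⟨-, gx, hgx, hx⟩ := hsub x.1 x.2
    exact ⟨⟨gx, hgx⟩, hx⟩
  choose g hg using hex
  have hM : Nonempty {f // f ∈ E'} := ⟨⟨f0, hf0⟩⟩
  set d : {f // f ∈ E'} → ℕ := fun x => (upath hT r (g x)).length with hddef
  have hginj : ∀ x y : {f // f ∈ E'}, g x = g y → x = y := by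
    intro x y hxy
    apply Subtype.ext
    rw [hg x, hg y, hxy]
  have hV'mem : ∀ (x : {f // f ∈ E'}) {v : V}, v ∈ x.1 → v ∈ V' := by
    intro x v hv
    rw [hg x] at hv
    exact (Finset.mem_inter.mp hv).2
  have hGmem : ∀ (x : {f // f ∈ E'}) {v : V}, v ∈ x.1 → v ∈ (g x).1 := by
    intro x v hv
    rw [hg x] at hv
    exact (Finset.mem_inter.mp hv).1
  have honc : ∀ a b : {f // f ∈ E}, anc hT r a b ↔ onTreePath T r b a := by
    intro a b
    constructor
    · intro ha p hp
      rw [Stmt12Aux.upath_eq hT p hp]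
      exact ha
    · intro hp
      exact hp _ (upath_isPath hT r b)
  have hcomp : ∀ a b : {f // f ∈ E}, (a.1 ∩ b.1).Nonempty →
      anc hT r a b ∨ anc hT r b a := by
    intro a b hab
    rcases eq_or_ne a b with rfl | hne
    · exact Or.inl (anc_refl hT r a)
    by_contra hcon
    push_neg at hcon
    have hdisj := D.disj a b hne (fun hp => hcon.1 ((honc a b).mpr hp))
      (fun hp => hcon.2 ((honc b a).mpr hp))
    rw [hdisj] at hab
    exact Finset.not_nonempty_empty hab
  have hvert : ∀ (v : V) (a b c : {f // f ∈ E}), v ∈ a.1 → v ∈ b.1 →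
      c ∈ (upath hT a b).support → v ∈ c.1 := by
    intro v a b c hva hvb hc
    exact walk_through hT {f : {f // f ∈ E} | v ∈ f.1} (D.J.conn v) hva hvb hc
  -- the candidate strict ancestors of a node
  set cands : {f // f ∈ E'} → Finset {f // f ∈ E'} :=
    fun y => Finset.univ.filter (fun x => x ≠ y ∧ anc hT r (g x) (g y)) with hcands
  have hmemcands : ∀ x y, x ∈ cands y ↔ (x ≠ y ∧ anc hT r (g x) (g y)) := by
    intro x y
    simp [hcands]
  obtain ⟨r0, -, hr0min⟩ := Finset.exists_min_image (Finset.univ : Finset {f // f ∈ E'}) d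
    ⟨Classical.arbitrary _, Finset.mem_univ _⟩
  have hr0cands : cands r0 = ∅ := by
    rw [Finset.eq_empty_iff_forall_notMem]
    intro x hx
    rw [hmemcands] at hx
    have hgne : g x ≠ g r0 := fun hh => hx.1 (hginj _ _ hh)
    have := length_lt_of_anc hT hx.2 hgne
    have := hr0min x (Finset.mem_univ x)
    simp only [hddef] at this
    omega
  set parent : {f // f ∈ E'} → {f // f ∈ E'} :=
    fun y => if h : (cands y).Nonempty then
      Classical.choose (Finset.exists_max_image (cands y) d h) else r0 with hparent
  have hparent_spec : ∀ y (h : (cands y).Nonempty),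
      parent y ∈ cands y ∧ ∀ x ∈ cands y, d x ≤ d (parent y) := by
    intro y h
    simp only [hparent, dif_pos h]
    obtain ⟨h1, h2⟩ := Classical.choose_spec (Finset.exists_max_image (cands y) d h)
    exact ⟨h1, h2⟩
  have hparent_r0 : parent r0 = r0 := by
    have : ¬ (cands r0).Nonempty := by rw [hr0cands]; exact Finset.not_nonempty_empty
    simp only [hparent, dif_neg this]
  set rank : {f // f ∈ E'} → ℕ :=
    fun y => if (cands y).Nonempty then 2 + d y else (if y = r0 then 0 else 1) with hrank
  have hdec : ∀ y, y ≠ r0 → rank (parent y) < rank y := by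
    intro y hy0
    by_cases h : (cands y).Nonempty
    · obtain ⟨hpmem, hpmax⟩ := hparent_spec y h
      rw [hmemcands] at hpmem
      have hgne : g (parent y) ≠ g y := fun hh => hpmem.1 (hginj _ _ hh)
      have hdp : d (parent y) < d y := length_lt_of_anc hT hpmem.2 hgne
      simp only [hrank, if_pos h]
      by_cases h2 : (cands (parent y)).Nonempty
      · rw [if_pos h2]; omega
      · rw [if_neg h2]
        split <;> omega
    · have hpy : parent y = r0 := by simp only [hparent, dif_neg h]
      have : ¬ (cands r0).Nonempty := by rw [hr0cands]; exact Finset.not_nonempty_empty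
      simp only [hrank, hpy, if_neg h, if_neg this, if_neg hy0]
      simp
  set G' : SimpleGraph {f // f ∈ E'} := SimpleGraph.fromRel (fun x y => parent x = y)
    with hG'def
  have htree : G'.IsTree := isTree_fromRel parent rank r0 hparent_r0 hdec
  -- the connectivity condition
  have hconn : ∀ v : V, (G'.induce {x : {f // f ∈ E'} | v ∈ x.1}).Preconnected := by
    intro v
    set S : Set {f // f ∈ E'} := {x : {f // f ∈ E'} | v ∈ x.1} with hSdef
    have step : ∀ (x y : {f // f ∈ E'}), v ∈ x.1 → v ∈ y.1 → anc hT r (g x) (g y) →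
        x ≠ y → parent y ≠ y ∧ v ∈ (parent y).1 ∧
          anc hT r (g x) (g (parent y)) ∧ d (parent y) < d y := by
      intro x y hvx hvy hanc hxy
      have hxc : x ∈ cands y := (hmemcands x y).mpr ⟨hxy, hanc⟩
      have hne : (cands y).Nonempty := ⟨x, hxc⟩
      obtain ⟨hpmem, hpmax⟩ := hparent_spec y hne
      rw [hmemcands] at hpmem
      have hgne : g (parent y) ≠ g y := fun hh => hpmem.1 (hginj _ _ hh)
      have hdp : d (parent y) < d y := length_lt_of_anc hT hpmem.2 hgne
      have hxp : anc hT r (g x) (g (parent y)) :=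
        anc_of_le hT hanc hpmem.2 (hpmax x hxc)
      have hvp : v ∈ (parent y).1 := by
        rw [hg (parent y)]
        refine Finset.mem_inter.mpr ⟨?_, hV'mem x hvx⟩
        exact hvert v (g x) (g y) (g (parent y)) (hGmem x hvx) (hGmem y hvy)
          (mem_upath_between hT hxp hpmem.2)
      exact ⟨hpmem.1, hvp, hxp, hdp⟩
    have main : ∀ (n : ℕ) (x y : {f // f ∈ E'}) (hvx : v ∈ x.1) (hvy : v ∈ y.1),
        anc hT r (g x) (g y) → d y ≤ n →
        (G'.induce S).Reachable ⟨x, hvx⟩ ⟨y, hvy⟩ := by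
      intro n
      induction n with
      | zero =>
        intro x y hvx hvy hanc hdy
        rcases eq_or_ne x y with rfl | hxy
        · rfl
        · obtain ⟨-, -, -, hlt⟩ := step x y hvx hvy hanc hxy
          omega
      | succ n ih =>
        intro x y hvx hvy hanc hdy
        rcases eq_or_ne x y with rfl | hxy
        · rfl
        · obtain ⟨hpy, hvp, hxp, hlt⟩ := step x y hvx hvy hanc hxy
          have hadj : (G'.induce S).Adj ⟨parent y, hvp⟩ ⟨y, hvy⟩ := by
            rw [SimpleGraph.comap_adj]
            rw [hG'def, SimpleGraph.fromRel_adj]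
            exact ⟨hpy, Or.inr rfl⟩
          exact (ih x (parent y) hvx hvp hxp (by omega)).trans hadj.reachable
    rintro ⟨x, hvx⟩ ⟨y, hvy⟩
    have hiv : v ∈ ((g x).1 ∩ (g y).1) :=
      Finset.mem_inter.mpr ⟨hGmem x hvx, hGmem y hvy⟩
    rcases hcomp (g x) (g y) ⟨v, hiv⟩ with hc | hc
    · exact (main (d y) x y hvx hvy hc le_rfl)
    · exact (main (d x) y x hvy hvx hc le_rfl).symm
  exact ⟨⟨G', htree, hconn⟩⟩

end Main
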